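/- arXiv:2006.15215 — 2 statements merged into one kernel-verified Lean document; each statement's English description precedes it below -/
import Mathlib

section
/- Every root of the weighted matching polynomial μ(G) is real, and all roots lie in the closed interval [min_j r_j − 2·√(B_G), max_j r_j + 2·√(B_G)]. -/
open Polynomial
open scoped Classical

/-- A matching of the weighted graph with edge weights `lam`, inside the vertex set `A`:
a set of pairs `(j,k)` with `j < k`, `lam j k ≠ 0`, endpoints in `A`,
no two pairs sharing a vertex. -/
def IsMatching {n : ℕ} (lam : Fin n → Fin n → ℝ) (A : Finset (Fin n))
    (M : Finset (Fin n × Fin n)) : Prop :=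
  (∀ e ∈ M, e.1 < e.2 ∧ lam e.1 e.2 ≠ 0 ∧ e.1 ∈ A ∧ e.2 ∈ A) ∧
  ∀ e ∈ M, ∀ f ∈ M, e ≠ f → e.1 ≠ f.1 ∧ e.1 ≠ f.2 ∧ e.2 ≠ f.1 ∧ e.2 ≠ f.2

/-- The vertices covered by a matching. -/
def mVerts {n : ℕ} (M : Finset (Fin n × Fin n)) : Finset (Fin n) :=
  M.image Prod.fst ∪ M.image Prod.snd

/-- The finite set of matchings inside the vertex set `A`. -/
noncomputable def matchings {n : ℕ} (lam : Fin n → Fin n → ℝ) (A : Finset (Fin n)) :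
    Finset (Finset (Fin n × Fin n)) :=
  Finset.univ.filter fun M => IsMatching lam A M

/-- The weighted matching polynomial of the induced weighted subgraph on the vertex set `A`
(the matching polynomial of the empty graph is `1`). -/
noncomputable def mu {n : ℕ} (r : Fin n → ℝ) (lam : Fin n → Fin n → ℝ)
    (A : Finset (Fin n)) : Polynomial ℝ :=
  ∑ M ∈ matchings lam A,
    (∏ i ∈ A \ mVerts M, (X - C (r i))) * C (∏ e ∈ M, lam e.1 e.2)

/-- The multivariate matching polynomial evaluated at the complex numbers `x 1, …, x n`. -/
noncomputable def muC {n : ℕ} (lam : Fin n → Fin n → ℝ) (x : Fin n → ℂ) : ℂ :=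
  ∑ M ∈ matchings lam (Finset.univ : Finset (Fin n)),
    (∏ i ∈ Finset.univ \ mVerts M, x i) * ∏ e ∈ M, (lam e.1 e.2 : ℂ)

/-- The constant `B_G`: for `n ≥ 3` the maximum over vertices `j` and sets
`A ⊆ [n] ∖ {j}` with `|A| = n - 2` of `∑_{k ∈ A} (-λ_{jk})`; `-λ_{12}/4` for `n = 2`;
`0` for `n = 1`. -/
noncomputable def BG (n : ℕ) (lam : Fin n → Fin n → ℝ) : ℝ :=
  if 3 ≤ n then
    sSup {S : ℝ | ∃ j : Fin n, ∃ A : Finset (Fin n),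
      j ∉ A ∧ A.card = n - 2 ∧ S = ∑ k ∈ A, -lam j k}
  else if h : n = 2 then -lam ⟨0, by omega⟩ ⟨1, by omega⟩ / 4
  else 0

/-- `l` is a path from `i` to `j` inside the vertex set `A`: a nonempty list of distinct
vertices of `A`, starting at `i`, ending at `j`, with consecutive vertices joined by
edges of nonzero weight. -/
def IsPathIn {n : ℕ} (lam : Fin n → Fin n → ℝ) (A : Finset (Fin n)) (i j : Fin n)
    (l : List (Fin n)) : Prop :=
  l ≠ [] ∧ l.Nodup ∧ (∀ v ∈ l, v ∈ A) ∧ l.head? = some i ∧ l.getLast? = some j ∧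
    l.Chain' fun u v => lam u v ≠ 0

/-- `λ_c`: the product of `-λ_e` over the edges `e` of the path `c` (equal to `1` for a
trivial path). -/
def pathWeight {n : ℕ} (lam : Fin n → Fin n → ℝ) (l : List (Fin n)) : ℝ :=
  ((l.zip l.tail).map fun p => -lam p.1 p.2).prod

/-- A real polynomial viewed as a rational function. -/
noncomputable def toRF (p : Polynomial ℝ) : RatFunc ℝ :=
  algebraMap (Polynomial ℝ) (RatFunc ℝ) p

/-- The graph continued fraction `α_v = μ(A)/μ(A ∖ v)` as a rational function. -/
noncomputable def alpha {n : ℕ} (r : Fin n → ℝ) (lam : Fin n → Fin n → ℝ) (v : Fin n)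
    (A : Finset (Fin n)) : RatFunc ℝ :=
  toRF (mu r lam A) / toRF (mu r lam (A.erase v))

/-- `λ_{i∼j} = -(∑_{c ∈ [i→j]} λ_c · μ(A∖c)²) / μ(A∖{i,j})²` as a rational function. -/
noncomputable def lamSim {n : ℕ} (r : Fin n → ℝ) (lam : Fin n → Fin n → ℝ) (i j : Fin n)
    (A : Finset (Fin n)) : RatFunc ℝ :=
  -(∑ᶠ l ∈ {l : List (Fin n) | IsPathIn lam A i j l},
      toRF (C (pathWeight lam l) * mu r lam (A \ l.toFinset) ^ 2)) /
    toRF (mu r lam ((A.erase i).erase j)) ^ 2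

/-- The value of a rational function at `θ`, taken after cancelling common factors;
`none` encodes the value `∞` (a pole). -/
noncomputable def valAt (f : RatFunc ℝ) (θ : ℝ) : Option ℝ :=
  if f.denom.eval θ = 0 then none else some (f.num.eval θ / f.denom.eval θ)

/-- The set `0_{θ,A}` of θ-essential vertices: `m_θ(A∖v) = m_θ(A) - 1`. -/
def zeroSet {n : ℕ} (r : Fin n → ℝ) (lam : Fin n → Fin n → ℝ) (θ : ℝ)
    (A : Finset (Fin n)) : Set (Fin n) :=
  {v | v ∈ A ∧
    (mu r lam A).rootMultiplicity θ = (mu r lam (A.erase v)).rootMultiplicity θ + 1}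

/-- The set `∞_{θ,A}`: `m_θ(A∖v) = m_θ(A) + 1`. -/
def infSet {n : ℕ} (r : Fin n → ℝ) (lam : Fin n → Fin n → ℝ) (θ : ℝ)
    (A : Finset (Fin n)) : Set (Fin n) :=
  {v | v ∈ A ∧
    (mu r lam (A.erase v)).rootMultiplicity θ = (mu r lam A).rootMultiplicity θ + 1}

/-- The set `+_{θ,A}`: `m_θ(A∖v) = m_θ(A)` and `α_v(A)(θ) > 0`. -/
def plusSet {n : ℕ} (r : Fin n → ℝ) (lam : Fin n → Fin n → ℝ) (θ : ℝ)
    (A : Finset (Fin n)) : Set (Fin n) :=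
  {v | v ∈ A ∧
    (mu r lam (A.erase v)).rootMultiplicity θ = (mu r lam A).rootMultiplicity θ ∧
    ∃ t : ℝ, valAt (alpha r lam v A) θ = some t ∧ 0 < t}

/-- The set `−_{θ,A}`: `m_θ(A∖v) = m_θ(A)` and `α_v(A)(θ) < 0`. -/
def minusSet {n : ℕ} (r : Fin n → ℝ) (lam : Fin n → Fin n → ℝ) (θ : ℝ)
    (A : Finset (Fin n)) : Set (Fin n) :=
  {v | v ∈ A ∧
    (mu r lam (A.erase v)).rootMultiplicity θ = (mu r lam A).rootMultiplicity θ ∧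
    ∃ t : ℝ, valAt (alpha r lam v A) θ = some t ∧ t < 0}

/-- The frontier `∂0_{θ,A}`: vertices not in `0_{θ,A}` with a neighbor in `0_{θ,A}`. -/
def frontierZero {n : ℕ} (r : Fin n → ℝ) (lam : Fin n → Fin n → ℝ) (θ : ℝ)
    (A : Finset (Fin n)) : Set (Fin n) :=
  {v | v ∈ A ∧ v ∉ zeroSet r lam θ A ∧ ∃ w ∈ zeroSet r lam θ A, lam v w ≠ 0}

/-- The underlying simple graph: edges are the pairs with nonzero edge weight. -/
def wGraph {n : ℕ} (lam : Fin n → Fin n → ℝ) : SimpleGraph (Fin n) :=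
  SimpleGraph.fromRel fun j k => lam j k ≠ 0

section AuxMatching

variable {n : ℕ} (r : Fin n → ℝ) (lam : Fin n → Fin n → ℝ)

lemma aux_mem_matchings {A : Finset (Fin n)} {M : Finset (Fin n × Fin n)} :
    M ∈ matchings lam A ↔ IsMatching lam A M := by
  simp [matchings]

lemma aux_mem_mVerts {M : Finset (Fin n × Fin n)} {a : Fin n} :
    a ∈ mVerts M ↔ ∃ e ∈ M, e.1 = a ∨ e.2 = a := by
  simp only [mVerts, Finset.mem_union, Finset.mem_image]
  constructor
  · rintro (⟨e, he, h⟩ | ⟨e, he, h⟩)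
    · exact ⟨e, he, Or.inl h⟩
    · exact ⟨e, he, Or.inr h⟩
  · rintro ⟨e, he, h | h⟩
    · exact Or.inl ⟨e, he, h⟩
    · exact Or.inr ⟨e, he, h⟩

lemma aux_matchings_empty : matchings lam (∅ : Finset (Fin n)) = {∅} := by
  ext M
  simp only [aux_mem_matchings, Finset.mem_singleton]
  constructor
  · rintro ⟨h1, _⟩
    by_contra hne
    obtain ⟨e, he⟩ := Finset.nonempty_iff_ne_empty.mpr hne
    exact absurd (h1 e he).2.2.1 (by simp)
  · rintro rfl
    exact ⟨by simp, by simp⟩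

lemma aux_mu_empty : mu r lam (∅ : Finset (Fin n)) = 1 := by
  simp [mu, aux_matchings_empty, mVerts]

/-- the ordered edge joining `v` and `k`. -/
def auxE (v k : Fin n) : Fin n × Fin n := if v < k then (v, k) else (k, v)

lemma aux_auxE (v k : Fin n) :
    (auxE v k = (v, k) ∧ v < k) ∨ (auxE v k = (k, v) ∧ ¬ v < k) := by
  unfold auxE; split <;> simp [*]

lemma aux_mVerts_insert (e : Fin n × Fin n) (M : Finset (Fin n × Fin n)) :
    mVerts (insert e M) = insert e.1 (insert e.2 (mVerts M)) := by
  ext a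
  simp only [mVerts, Finset.mem_union, Finset.mem_image, Finset.mem_insert]
  constructor
  · rintro (⟨f, hf, rfl⟩ | ⟨f, hf, rfl⟩) <;> rcases hf with rfl | hf
    · exact Or.inl rfl
    · exact Or.inr (Or.inr (Or.inl ⟨f, hf, rfl⟩))
    · exact Or.inr (Or.inl rfl)
    · exact Or.inr (Or.inr (Or.inr ⟨f, hf, rfl⟩))
  · rintro (rfl | rfl | (⟨f, hf, rfl⟩ | ⟨f, hf, rfl⟩))
    · exact Or.inl ⟨e, Or.inl rfl, rfl⟩
    · exact Or.inr ⟨e, Or.inl rfl, rfl⟩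
    · exact Or.inl ⟨f, Or.inr hf, rfl⟩
    · exact Or.inr ⟨f, Or.inr hf, rfl⟩

lemma aux_matchings_erase (v : Fin n) (A : Finset (Fin n)) :
    (matchings lam A).filter (fun M => ¬ v ∈ mVerts M) = matchings lam (A.erase v) := by
  ext M
  simp only [Finset.mem_filter, aux_mem_matchings]
  constructor
  · rintro ⟨⟨h1, h2⟩, hvM⟩
    refine ⟨fun e he => ?_, h2⟩
    obtain ⟨hlt, hl, h1A, h2A⟩ := h1 e he
    refine ⟨hlt, hl, Finset.mem_erase.mpr ⟨?_, h1A⟩, Finset.mem_erase.mpr ⟨?_, h2A⟩⟩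
    · rintro rfl; exact hvM ((aux_mem_mVerts).mpr ⟨e, he, Or.inl rfl⟩)
    · rintro rfl; exact hvM ((aux_mem_mVerts).mpr ⟨e, he, Or.inr rfl⟩)
  · rintro ⟨h1, h2⟩
    refine ⟨⟨fun e he => ?_, h2⟩, fun hvM => ?_⟩
    · obtain ⟨hlt, hl, h1A, h2A⟩ := h1 e he
      exact ⟨hlt, hl, (Finset.mem_erase.mp h1A).2, (Finset.mem_erase.mp h2A).2⟩
    · obtain ⟨e, he, h⟩ := (aux_mem_mVerts).mp hvM
      obtain ⟨hlt, hl, h1A, h2A⟩ := h1 e he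
      rcases h with rfl | rfl
      · exact (Finset.mem_erase.mp h1A).1 rfl
      · exact (Finset.mem_erase.mp h2A).1 rfl

/-- The fundamental deletion recursion for the weighted matching polynomial. -/
lemma aux_mu_rec (hsym : ∀ j k, lam j k = lam k j) {A : Finset (Fin n)} {v : Fin n}
    (hv : v ∈ A) :
    mu r lam A = (X - C (r v)) * mu r lam (A.erase v)
      + ∑ k ∈ A.erase v, C (lam v k) * mu r lam ((A.erase v).erase k) := by
  classical
  have hsplit := Finset.sum_filter_add_sum_filter_not (matchings lam A)
      (fun M => v ∈ mVerts M)
      (fun M => (∏ i ∈ A \ mVerts M, (X - C (r i))) * C (∏ e ∈ M, lam e.1 e.2))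
  rw [mu, ← hsplit]
  -- the part where v is uncovered
  have huncov : (∑ M ∈ (matchings lam A).filter (fun M => ¬ v ∈ mVerts M),
      (∏ i ∈ A \ mVerts M, (X - C (r i))) * C (∏ e ∈ M, lam e.1 e.2))
      = (X - C (r v)) * mu r lam (A.erase v) := by
    rw [aux_matchings_erase, mu, Finset.mul_sum]
    refine Finset.sum_congr rfl fun M hM => ?_
    have hvM : v ∉ mVerts M := by
      intro hvM
      obtain ⟨e, he, h⟩ := (aux_mem_mVerts).mp hvM
      obtain ⟨hlt, hl, h1A, h2A⟩ := ((aux_mem_matchings _).mp hM).1 e he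
      rcases h with rfl | rfl
      · exact (Finset.mem_erase.mp h1A).1 rfl
      · exact (Finset.mem_erase.mp h2A).1 rfl
    have hset : A \ mVerts M = insert v ((A.erase v) \ mVerts M) := by
      ext i
      simp only [Finset.mem_sdiff, Finset.mem_insert, Finset.mem_erase]
      constructor
      · rintro ⟨hiA, hiM⟩
        by_cases hiv : i = v
        · exact Or.inl hiv
        · exact Or.inr ⟨⟨hiv, hiA⟩, hiM⟩
      · rintro (rfl | ⟨⟨hiv, hiA⟩, hiM⟩)
        · exact ⟨hv, hvM⟩
        · exact ⟨hiA, hiM⟩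
    rw [hset, Finset.prod_insert (by simp), mul_assoc]
  -- the part where v is covered
  have hcovsets : (matchings lam A).filter (fun M => v ∈ mVerts M)
      = (A.erase v).biUnion (fun k => (matchings lam A).filter (fun M => auxE v k ∈ M)) := by
    ext M
    simp only [Finset.mem_filter, Finset.mem_biUnion]
    constructor
    · rintro ⟨hM, hvM⟩
      obtain ⟨e, heM, he⟩ := (aux_mem_mVerts).mp hvM
      obtain ⟨hlt, hne, h1A, h2A⟩ := ((aux_mem_matchings _).mp hM).1 e heM
      rcases he with rfl | rfl
      · refine ⟨e.2, Finset.mem_erase.mpr ⟨ne_of_gt hlt, h2A⟩, hM, ?_⟩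
        have : auxE e.1 e.2 = e := by unfold auxE; rw [if_pos hlt]
        rw [this]; exact heM
      · refine ⟨e.1, Finset.mem_erase.mpr ⟨ne_of_lt hlt, h1A⟩, hM, ?_⟩
        have : auxE e.2 e.1 = e := by unfold auxE; rw [if_neg (not_lt.mpr (le_of_lt hlt))]
        rw [this]; exact heM
    · rintro ⟨k, hk, hM, heM⟩
      refine ⟨hM, ?_⟩
      rcases aux_auxE v k with ⟨he, _⟩ | ⟨he, _⟩ <;> rw [he] at heM
      · exact (aux_mem_mVerts).mpr ⟨(v, k), heM, Or.inl rfl⟩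
      · exact (aux_mem_mVerts).mpr ⟨(k, v), heM, Or.inr rfl⟩
  have hdisj : (↑(A.erase v) : Set (Fin n)).PairwiseDisjoint
      (fun k => (matchings lam A).filter (fun M => auxE v k ∈ M)) := by
    intro k hk k' hk' hkk'
    have hkv : k ≠ v := (Finset.mem_erase.mp (Finset.mem_coe.mp hk)).1
    refine Finset.disjoint_left.mpr fun M hM hM' => ?_
    have hekM := (Finset.mem_filter.mp hM).2
    have hek'M := (Finset.mem_filter.mp hM').2
    have hp := ((aux_mem_matchings _).mp (Finset.mem_filter.mp hM).1).2
    have hne : auxE v k ≠ auxE v k' := by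
      rcases aux_auxE v k with ⟨he, h1⟩ | ⟨he, h1⟩ <;>
        rcases aux_auxE v k' with ⟨he', h1'⟩ | ⟨he', h1'⟩ <;>
          rw [he, he'] <;> intro hh <;> rw [Prod.mk.injEq] at hh
      · exact hkk' hh.2
      · exact lt_irrefl v (hh.2 ▸ h1)
      · exact hkv hh.1
      · exact hkk' hh.1
    have h4 := hp _ hekM _ hek'M hne
    rcases aux_auxE v k with ⟨he, _⟩ | ⟨he, _⟩ <;>
      rcases aux_auxE v k' with ⟨he', _⟩ | ⟨he', _⟩ <;>
        rw [he, he'] at h4 <;> simp at h4 <;> tauto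
  have hks : ∀ k ∈ A.erase v,
      (∑ M ∈ (matchings lam A).filter (fun M => auxE v k ∈ M),
        (∏ i ∈ A \ mVerts M, (X - C (r i))) * C (∏ e ∈ M, lam e.1 e.2))
      = C (lam v k) * mu r lam ((A.erase v).erase k) := by
    intro k hk
    obtain ⟨hkv, hkA⟩ := Finset.mem_erase.mp hk
    have hco : ((auxE v k).1 = v ∧ (auxE v k).2 = k) ∨
        ((auxE v k).1 = k ∧ (auxE v k).2 = v) := by
      rcases aux_auxE v k with ⟨he, _⟩ | ⟨he, _⟩ <;> rw [he] <;> simp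
    by_cases hl : lam v k = 0
    · have hemp : (matchings lam A).filter (fun M => auxE v k ∈ M) = ∅ := by
        rw [Finset.filter_eq_empty_iff]
        intro M hM hE
        have h1 := (((aux_mem_matchings _).mp hM).1 _ hE).2.1
        rcases hco with ⟨hc1, hc2⟩ | ⟨hc1, hc2⟩ <;> rw [hc1, hc2] at h1
        · exact h1 hl
        · exact h1 ((hsym k v).trans hl)
      rw [hemp, hl]; simp
    · rw [mu, Finset.mul_sum]
      refine Finset.sum_bij' (fun M _ => M.erase (auxE v k))
        (fun M' _ => insert (auxE v k) M') ?_ ?_ ?_ ?_ ?_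
      · -- forward maps into matchings of A'' 
        intro M hM
        obtain ⟨hM, hE⟩ := Finset.mem_filter.mp hM
        obtain ⟨h1, hp⟩ := (aux_mem_matchings _).mp hM
        refine (aux_mem_matchings _).mpr ⟨fun e' he' => ?_, fun e' he' f' hf' hnef =>
          hp e' (Finset.mem_of_mem_erase he') f' (Finset.mem_of_mem_erase hf') hnef⟩
        obtain ⟨hnee, he'M⟩ := Finset.mem_erase.mp he'
        obtain ⟨hlt, hlam, h1A, h2A⟩ := h1 e' he'M
        have h4 := hp e' he'M _ hE hnee
        have hco4 : e'.1 ≠ v ∧ e'.1 ≠ k ∧ e'.2 ≠ v ∧ e'.2 ≠ k := by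
          rcases hco with ⟨hc1, hc2⟩ | ⟨hc1, hc2⟩ <;> rw [hc1, hc2] at h4 <;> tauto
        exact ⟨hlt, hlam, Finset.mem_erase.mpr ⟨hco4.2.1, Finset.mem_erase.mpr ⟨hco4.1, h1A⟩⟩,
          Finset.mem_erase.mpr ⟨hco4.2.2.2, Finset.mem_erase.mpr ⟨hco4.2.2.1, h2A⟩⟩⟩
      · -- backward maps into filter set
        intro M' hM'
        obtain ⟨h1, hp⟩ := (aux_mem_matchings _).mp hM'
        have hcoords : ∀ e' ∈ M', e'.1 ≠ v ∧ e'.1 ≠ k ∧ e'.2 ≠ v ∧ e'.2 ≠ k := by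
          intro e' he'
          obtain ⟨_, _, h1A, h2A⟩ := h1 e' he'
          obtain ⟨h1k, h1A'⟩ := Finset.mem_erase.mp h1A
          obtain ⟨h1v, _⟩ := Finset.mem_erase.mp h1A'
          obtain ⟨h2k, h2A'⟩ := Finset.mem_erase.mp h2A
          obtain ⟨h2v, _⟩ := Finset.mem_erase.mp h2A'
          exact ⟨h1v, h1k, h2v, h2k⟩
        have heok : (auxE v k).1 < (auxE v k).2 ∧ lam (auxE v k).1 (auxE v k).2 ≠ 0 ∧
            (auxE v k).1 ∈ A ∧ (auxE v k).2 ∈ A := by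
          rcases aux_auxE v k with ⟨he, hlt⟩ | ⟨he, hlt⟩ <;> rw [he]
          · exact ⟨hlt, hl, hv, hkA⟩
          · exact ⟨lt_of_le_of_ne (not_lt.mp hlt) hkv, fun h => hl ((hsym v k).trans h),
              hkA, hv⟩
        refine Finset.mem_filter.mpr ⟨(aux_mem_matchings _).mpr ⟨?_, ?_⟩, Finset.mem_insert_self _ _⟩
        · intro e' he'
          rcases Finset.mem_insert.mp he' with rfl | he'
          · exact heok
          · obtain ⟨hlt, hlam, h1A, h2A⟩ := h1 e' he'
            exact ⟨hlt, hlam, Finset.mem_of_mem_erase (Finset.mem_of_mem_erase h1A),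
              Finset.mem_of_mem_erase (Finset.mem_of_mem_erase h2A)⟩
        · intro e' he' f' hf' hnef
          have hEco : ∀ g ∈ M', (auxE v k).1 ≠ g.1 ∧ (auxE v k).1 ≠ g.2 ∧
              (auxE v k).2 ≠ g.1 ∧ (auxE v k).2 ≠ g.2 := by
            intro g hg
            obtain ⟨hg1v, hg1k, hg2v, hg2k⟩ := hcoords g hg
            rcases hco with ⟨hc1, hc2⟩ | ⟨hc1, hc2⟩ <;> rw [hc1, hc2]
            · exact ⟨Ne.symm hg1v, Ne.symm hg2v, Ne.symm hg1k, Ne.symm hg2k⟩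
            · exact ⟨Ne.symm hg1k, Ne.symm hg2k, Ne.symm hg1v, Ne.symm hg2v⟩
          rcases Finset.mem_insert.mp he' with rfl | he'M <;>
            rcases Finset.mem_insert.mp hf' with rfl | hf'M
          · exact absurd rfl hnef
          · exact hEco f' hf'M
          · obtain ⟨h1, h2, h3, h4⟩ := hEco e' he'M
            exact ⟨Ne.symm h1, Ne.symm h3, Ne.symm h2, Ne.symm h4⟩
          · exact hp e' he'M f' hf'M hnef
      · -- left inverse
        intro M hM
        exact Finset.insert_erase (Finset.mem_filter.mp hM).2
      · -- right inverse
        intro M' hM'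
        refine Finset.erase_insert ?_
        intro hE
        obtain ⟨h1, _⟩ := (aux_mem_matchings _).mp hM'
        obtain ⟨_, _, h1A, h2A⟩ := h1 _ hE
        rcases hco with ⟨hc1, _⟩ | ⟨hc1, _⟩ <;> rw [hc1] at h1A
        · exact (Finset.mem_erase.mp (Finset.mem_erase.mp h1A).2).1 rfl
        · exact (Finset.mem_erase.mp h1A).1 rfl
      · -- values agree
        intro M hM
        obtain ⟨hM, hE⟩ := Finset.mem_filter.mp hM
        obtain ⟨h1, hp⟩ := (aux_mem_matchings _).mp hM
        have hsetid : A \ mVerts M = ((A.erase v).erase k) \ mVerts (M.erase (auxE v k)) := by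
          ext i
          simp only [Finset.mem_sdiff, Finset.mem_erase]
          constructor
          · rintro ⟨hiA, hiM⟩
            have hiv : i ≠ v := by
              rintro rfl
              rcases hco with ⟨hc1, _⟩ | ⟨_, hc2⟩
              · exact hiM ((aux_mem_mVerts).mpr ⟨_, hE, Or.inl hc1⟩)
              · exact hiM ((aux_mem_mVerts).mpr ⟨_, hE, Or.inr hc2⟩)
            have hik : i ≠ k := by
              rintro rfl
              rcases hco with ⟨_, hc2⟩ | ⟨hc1, _⟩
              · exact hiM ((aux_mem_mVerts).mpr ⟨_, hE, Or.inr hc2⟩)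
              · exact hiM ((aux_mem_mVerts).mpr ⟨_, hE, Or.inl hc1⟩)
            refine ⟨⟨hik, hiv, hiA⟩, fun hiM' => ?_⟩
            obtain ⟨e', he', hco'⟩ := (aux_mem_mVerts).mp hiM'
            exact hiM ((aux_mem_mVerts).mpr ⟨e', Finset.mem_of_mem_erase he', hco'⟩)
          · rintro ⟨⟨hik, hiv, hiA⟩, hiM'⟩
            refine ⟨hiA, fun hiM => ?_⟩
            obtain ⟨e', he', hco'⟩ := (aux_mem_mVerts).mp hiM
            by_cases hee : e' = auxE v k
            · rw [hee] at hco'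
              rcases hco with ⟨hc1, hc2⟩ | ⟨hc1, hc2⟩ <;> rcases hco' with h | h
              · exact hiv (h.symm.trans hc1)
              · exact hik (h.symm.trans hc2)
              · exact hik (h.symm.trans hc1)
              · exact hiv (h.symm.trans hc2)
            · exact hiM' ((aux_mem_mVerts).mpr ⟨e', Finset.mem_erase.mpr ⟨hee, he'⟩, hco'⟩)
        have hprod : (∏ e ∈ M, lam e.1 e.2)
            = lam v k * ∏ e ∈ M.erase (auxE v k), lam e.1 e.2 := by
          rw [← Finset.mul_prod_erase M _ hE]
          congr 1
          rcases hco with ⟨hc1, hc2⟩ | ⟨hc1, hc2⟩ <;> rw [hc1, hc2]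
          exact (hsym v k).symm
        rw [hsetid, hprod, map_mul]
        ring
  calc (∑ M ∈ (matchings lam A).filter (fun M => v ∈ mVerts M),
        (∏ i ∈ A \ mVerts M, (X - C (r i))) * C (∏ e ∈ M, lam e.1 e.2))
      + (∑ M ∈ (matchings lam A).filter (fun M => ¬ v ∈ mVerts M),
        (∏ i ∈ A \ mVerts M, (X - C (r i))) * C (∏ e ∈ M, lam e.1 e.2))
      = (∑ k ∈ A.erase v, C (lam v k) * mu r lam ((A.erase v).erase k))
        + (X - C (r v)) * mu r lam (A.erase v) := by
        rw [huncov, hcovsets, Finset.sum_biUnion hdisj, Finset.sum_congr rfl hks]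
    _ = _ := by rw [add_comm]

lemma aux_eval_rec (hsym : ∀ j k, lam j k = lam k j) {A : Finset (Fin n)} {v : Fin n}
    (hv : v ∈ A) (x : ℝ) :
    (mu r lam A).eval x = (x - r v) * (mu r lam (A.erase v)).eval x
      + ∑ k ∈ A.erase v, lam v k * (mu r lam ((A.erase v).erase k)).eval x := by
  rw [aux_mu_rec r lam hsym hv]
  simp [eval_finset_sum]

lemma aux_aeval_rec (hsym : ∀ j k, lam j k = lam k j) {A : Finset (Fin n)} {v : Fin n}
    (hv : v ∈ A) (z : ℂ) :
    aeval z (mu r lam A) = (z - (r v : ℂ)) * aeval z (mu r lam (A.erase v))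
      + ∑ k ∈ A.erase v, (lam v k : ℂ) * aeval z (mu r lam ((A.erase v).erase k)) := by
  rw [aux_mu_rec r lam hsym hv]
  simp [map_sum]

lemma aux_mu_singleton (hsym : ∀ j k, lam j k = lam k j) (v : Fin n) :
    mu r lam ({v} : Finset (Fin n)) = X - C (r v) := by
  rw [aux_mu_rec r lam hsym (Finset.mem_singleton_self v), Finset.erase_singleton,
    aux_mu_empty]
  simp

lemma aux_mu_lam_zero (hzero : ∀ j k : Fin n, j ≠ k → lam j k = 0) (A : Finset (Fin n)) :
    mu r lam A = ∏ i ∈ A, (X - C (r i)) := by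
  have hM : matchings lam A = {∅} := by
    ext M
    simp only [(aux_mem_matchings _), Finset.mem_singleton]
    constructor
    · rintro ⟨h1, _⟩
      by_contra hne
      obtain ⟨e, he⟩ := Finset.nonempty_iff_ne_empty.mpr hne
      obtain ⟨hlt, hl, _, _⟩ := h1 e he
      exact hl (hzero e.1 e.2 (ne_of_lt hlt))
    · rintro rfl
      exact ⟨by simp, by simp⟩
  simp [mu, hM, mVerts]

/-- complex induction: no roots off the real axis (upper half plane version). -/
lemma aux_key_complex (hsym : ∀ j k, lam j k = lam k j) (hnonpos : ∀ j k, lam j k ≤ 0)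
    (z : ℂ) (hz : 0 < z.im) :
    ∀ A : Finset (Fin n), aeval z (mu r lam A) ≠ 0 ∧
      ∀ v ∈ A, 0 < (aeval z (mu r lam A) / aeval z (mu r lam (A.erase v))).im := by
  intro A
  induction A using Finset.strongInduction with
  | _ A ih =>
    have main : ∀ v ∈ A,
        0 < (aeval z (mu r lam A) / aeval z (mu r lam (A.erase v))).im := by
      intro v hv
      have hvsub : A.erase v ⊂ A := Finset.erase_ssubset hv
      have hFv : aeval z (mu r lam (A.erase v)) ≠ 0 := (ih _ hvsub).1
      have hterm : ∀ k ∈ A.erase v,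
          0 ≤ ((lam v k : ℂ) * (aeval z (mu r lam ((A.erase v).erase k))
            / aeval z (mu r lam (A.erase v)))).im := by
        intro k hk
        have hksub : (A.erase v).erase k ⊂ A :=
          lt_of_le_of_lt (Finset.erase_subset _ _) hvsub
        have hFk : aeval z (mu r lam ((A.erase v).erase k)) ≠ 0 := (ih _ hksub).1
        have halpha := (ih _ hvsub).2 k hk
        have hinv : aeval z (mu r lam ((A.erase v).erase k)) / aeval z (mu r lam (A.erase v))
            = (aeval z (mu r lam (A.erase v)) / aeval z (mu r lam ((A.erase v).erase k)))⁻¹ := by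
          rw [inv_div]
        rw [hinv]
        rw [Complex.mul_im, Complex.ofReal_re, Complex.ofReal_im, Complex.inv_im]
        have hns : 0 ≤ Complex.normSq (aeval z (mu r lam (A.erase v))
            / aeval z (mu r lam ((A.erase v).erase k))) := Complex.normSq_nonneg _
        have h1 : -(aeval z (mu r lam (A.erase v))
            / aeval z (mu r lam ((A.erase v).erase k))).im
            / Complex.normSq (aeval z (mu r lam (A.erase v))
            / aeval z (mu r lam ((A.erase v).erase k))) ≤ 0 := by
          apply div_nonpos_of_nonpos_of_nonneg _ hns
          linarith
        have h2 := mul_nonneg (neg_nonneg.mpr (hnonpos v k)) (neg_nonneg.mpr h1)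
        rw [neg_mul_neg] at h2
        simpa using h2
      have hdiv : aeval z (mu r lam A) / aeval z (mu r lam (A.erase v))
          = (z - (r v : ℂ)) + ∑ k ∈ A.erase v,
            (lam v k : ℂ) * (aeval z (mu r lam ((A.erase v).erase k))
              / aeval z (mu r lam (A.erase v))) := by
        rw [aux_aeval_rec r lam hsym hv z, add_div, mul_div_cancel_right₀ _ hFv,
          Finset.sum_div]
        congr 1
        refine Finset.sum_congr rfl fun k hk => ?_
        rw [mul_div_assoc]
      rw [hdiv]
      rw [Complex.add_im, Complex.sub_im, Complex.ofReal_im, Complex.im_sum]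
      have hsum : 0 ≤ ∑ k ∈ A.erase v, ((lam v k : ℂ) *
          (aeval z (mu r lam ((A.erase v).erase k)) / aeval z (mu r lam (A.erase v)))).im :=
        Finset.sum_nonneg hterm
      linarith
    refine ⟨?_, main⟩
    rcases A.eq_empty_or_nonempty with rfl | ⟨v, hv⟩
    · rw [aux_mu_empty]; simp
    · intro h0
      have h := main v hv
      rw [h0, zero_div] at h
      simp at h

/-- real induction: positivity and ratio bound to the right of the interval. -/
lemma aux_key_real (hsym : ∀ j k, lam j k = lam k j) (hnonpos : ∀ j k, lam j k ≤ 0)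
    {B s x : ℝ} (hs : 0 < s) (hsB : s * s = B)
    (hsum : ∀ (v : Fin n) (S : Finset (Fin n)), v ∉ S → S.card ≤ n - 2 →
      (∑ k ∈ S, -lam v k) ≤ B)
    (hx : ∀ i, r i + 2 * s < x) :
    ∀ A : Finset (Fin n), A.card < n →
      0 < (mu r lam A).eval x ∧
      ∀ v ∈ A, (x - r v - (∑ k ∈ A.erase v, -lam v k) / s) * (mu r lam (A.erase v)).eval x
        ≤ (mu r lam A).eval x := by
  have hBs : B / s = s := by rw [← hsB, mul_div_assoc, div_self hs.ne', mul_one]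
  have hdivs : ∀ T : ℝ, T ≤ B → T / s ≤ s := by
    intro T hT
    calc T / s ≤ B / s := (div_le_div_iff_of_pos_right hs).mpr hT
      _ = s := hBs
  intro A
  induction A using Finset.strongInduction with
  | _ A ih =>
    intro hcard
    have main : ∀ v ∈ A,
        (x - r v - (∑ k ∈ A.erase v, -lam v k) / s) * (mu r lam (A.erase v)).eval x
          ≤ (mu r lam A).eval x := by
      intro v hv
      have hA1 : 1 ≤ A.card := Finset.card_pos.mpr ⟨v, hv⟩
      have hvsub := Finset.erase_ssubset hv
      have hvcard : (A.erase v).card < n :=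
        lt_trans (Finset.card_erase_lt_of_mem hv) hcard
      have ihv := ih _ hvsub hvcard
      have hcarde : (A.erase v).card = A.card - 1 := Finset.card_erase_of_mem hv
      have hcard2 : ∀ k : Fin n, ((A.erase v).erase k).card ≤ n - 2 := by
        intro k
        have := Finset.card_erase_le (s := A.erase v) (a := k)
        omega
      have hQvk : ∀ k ∈ A.erase v, 0 < (mu r lam ((A.erase v).erase k)).eval x ∧
          (mu r lam ((A.erase v).erase k)).eval x ≤ (mu r lam (A.erase v)).eval x / s := by
        intro k hk
        have hksub : (A.erase v).erase k ⊂ A :=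
          lt_of_le_of_lt (Finset.erase_subset _ _) hvsub
        have hkcard : ((A.erase v).erase k).card < n := by
          have := hcard2 k; omega
        refine ⟨(ih _ hksub hkcard).1, ?_⟩
        have hb := ihv.2 k hk
        have hc : s ≤ x - r k - (∑ m ∈ (A.erase v).erase k, -lam k m) / s := by
          have hT := hsum k _ (Finset.notMem_erase k _) (hcard2 k)
          have := hdivs _ hT
          linarith [hx k]
        rw [le_div_iff₀ hs]
        calc (mu r lam ((A.erase v).erase k)).eval x * s
            = s * (mu r lam ((A.erase v).erase k)).eval x := mul_comm _ _
          _ ≤ (x - r k - (∑ m ∈ (A.erase v).erase k, -lam k m) / s)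
              * (mu r lam ((A.erase v).erase k)).eval x :=
            mul_le_mul_of_nonneg_right hc (le_of_lt (ih _ hksub hkcard).1)
          _ ≤ _ := hb
      have hsumle : ∑ k ∈ A.erase v, (-lam v k) * (mu r lam ((A.erase v).erase k)).eval x
          ≤ (∑ k ∈ A.erase v, -lam v k) / s * (mu r lam (A.erase v)).eval x := by
        calc ∑ k ∈ A.erase v, (-lam v k) * (mu r lam ((A.erase v).erase k)).eval x
            ≤ ∑ k ∈ A.erase v, (-lam v k) * ((mu r lam (A.erase v)).eval x / s) :=
              Finset.sum_le_sum fun k hk =>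
                mul_le_mul_of_nonneg_left (hQvk k hk).2 (by linarith [hnonpos v k])
          _ = (∑ k ∈ A.erase v, -lam v k) * ((mu r lam (A.erase v)).eval x / s) :=
              (Finset.sum_mul _ _ _).symm
          _ = (∑ k ∈ A.erase v, -lam v k) / s * (mu r lam (A.erase v)).eval x := by ring
      have hrec := aux_eval_rec r lam hsym hv x
      have hneg : ∑ k ∈ A.erase v, lam v k * (mu r lam ((A.erase v).erase k)).eval x
          = -∑ k ∈ A.erase v, (-lam v k) * (mu r lam ((A.erase v).erase k)).eval x := by
        rw [← Finset.sum_neg_distrib]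
        exact Finset.sum_congr rfl fun k _ => by ring
      have hgoal : (x - r v - (∑ k ∈ A.erase v, -lam v k) / s) * (mu r lam (A.erase v)).eval x
          = (x - r v) * (mu r lam (A.erase v)).eval x
            - (∑ k ∈ A.erase v, -lam v k) / s * (mu r lam (A.erase v)).eval x := by ring
      rw [hrec, hneg, hgoal]
      linarith [hsumle]
    have hpos : 0 < (mu r lam A).eval x := by
      rcases A.eq_empty_or_nonempty with rfl | ⟨v, hv⟩
      · rw [aux_mu_empty]; simp
      · have hA1 : 1 ≤ A.card := Finset.card_pos.mpr ⟨v, hv⟩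
        have hvsub := Finset.erase_ssubset hv
        have hvcard : (A.erase v).card < n :=
          lt_trans (Finset.card_erase_lt_of_mem hv) hcard
        have hQv := (ih _ hvsub hvcard).1
        have hc : s ≤ x - r v - (∑ k ∈ A.erase v, -lam v k) / s := by
          have hce : (A.erase v).card ≤ n - 2 := by
            have := Finset.card_erase_of_mem hv; omega
          have hT := hsum v _ (Finset.notMem_erase v A) hce
          have := hdivs _ hT
          linarith [hx v]
        calc (0:ℝ) < s * (mu r lam (A.erase v)).eval x := mul_pos hs hQv
          _ ≤ (x - r v - (∑ k ∈ A.erase v, -lam v k) / s) * (mu r lam (A.erase v)).eval x :=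
            mul_le_mul_of_nonneg_right hc (le_of_lt hQv)
          _ ≤ _ := main v hv
    exact ⟨hpos, main⟩

lemma aux_BG_bddAbove :
    BddAbove {S : ℝ | ∃ j : Fin n, ∃ A : Finset (Fin n),
      j ∉ A ∧ A.card = n - 2 ∧ S = ∑ k ∈ A, -lam j k} := by
  apply Set.Finite.bddAbove
  apply Set.Finite.subset
    (Set.finite_range fun p : Fin n × Finset (Fin n) => ∑ k ∈ p.2, -lam p.1 k)
  rintro S ⟨j, A, _, _, rfl⟩
  exact ⟨(j, A), rfl⟩

lemma aux_le_BG (h3 : 3 ≤ n) (hnonpos : ∀ j k, lam j k ≤ 0) (v : Fin n)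
    (S : Finset (Fin n)) (hvS : v ∉ S) (hcS : S.card ≤ n - 2) :
    (∑ k ∈ S, -lam v k) ≤ BG n lam := by
  have hsub : S ⊆ Finset.univ.erase v := fun k hk =>
    Finset.mem_erase.mpr ⟨fun h => hvS (h ▸ hk), Finset.mem_univ k⟩
  have hcu : (Finset.univ.erase v : Finset (Fin n)).card = n - 1 := by
    rw [Finset.card_erase_of_mem (Finset.mem_univ v), Finset.card_univ, Fintype.card_fin]
  obtain ⟨T, hST, hTu, hTcard⟩ := Finset.exists_subsuperset_card_eq hsub hcS (by omega)
  have h1 : (∑ k ∈ S, -lam v k) ≤ ∑ k ∈ T, -lam v k :=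
    Finset.sum_le_sum_of_subset_of_nonneg hST fun k _ _ => by linarith [hnonpos v k]
  have hmem : (∑ k ∈ T, -lam v k) ∈ {S : ℝ | ∃ j : Fin n, ∃ A : Finset (Fin n),
      j ∉ A ∧ A.card = n - 2 ∧ S = ∑ k ∈ A, -lam j k} :=
    ⟨v, T, fun hvT => (Finset.mem_erase.mp (hTu hvT)).1 rfl, hTcard, rfl⟩
  have h2 := le_csSup (aux_BG_bddAbove lam) hmem
  rw [BG, if_pos h3]
  linarith

lemma aux_BG_nonneg (hn : 0 < n) (hnonpos : ∀ j k, lam j k ≤ 0) : 0 ≤ BG n lam := by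
  rcases le_or_gt 3 n with h3 | h3
  · have h := aux_le_BG lam h3 hnonpos ⟨0, hn⟩ ∅ (Finset.notMem_empty _) (by simp)
    simpa using h
  · rw [BG, if_neg (by omega)]
    by_cases h2 : n = 2
    · rw [dif_pos h2]
      have := hnonpos ⟨0, by omega⟩ ⟨1, by omega⟩
      linarith
    · rw [dif_neg h2]

lemma aux_BG_zero (hsym : ∀ j k, lam j k = lam k j) (hnonpos : ∀ j k, lam j k ≤ 0)
    (hB : BG n lam = 0) : ∀ j k : Fin n, j ≠ k → lam j k = 0 := by
  intro j k hjk
  rcases le_or_gt 3 n with h3 | h3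
  · have h := aux_le_BG lam h3 hnonpos j {k}
      (by simp only [Finset.mem_singleton]; exact hjk) (by simp only [Finset.card_singleton]; omega)
    rw [Finset.sum_singleton, hB] at h
    linarith [hnonpos j k]
  · by_cases h2 : n = 2
    · rw [BG, if_neg (by omega), dif_pos h2] at hB
      have hlam01 : lam ⟨0, by omega⟩ ⟨1, by omega⟩ = 0 := by linarith
      have hj2 := j.2
      have hk2 := k.2
      have hcases : (j.val = 0 ∧ k.val = 1) ∨ (j.val = 1 ∧ k.val = 0) := by
        have : j.val ≠ k.val := fun h => hjk (Fin.ext h)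
        omega
      rcases hcases with ⟨hj, hk⟩ | ⟨hj, hk⟩
      · have hje : j = ⟨0, by omega⟩ := Fin.ext (by simp [hj])
        have hke : k = ⟨1, by omega⟩ := Fin.ext (by simp [hk])
        rw [hje, hke]; exact hlam01
      · have hje : j = ⟨1, by omega⟩ := Fin.ext (by simp [hj])
        have hke : k = ⟨0, by omega⟩ := Fin.ext (by simp [hk])
        rw [hje, hke, hsym]; exact hlam01
    · exfalso
      have hj2 := j.2
      have hk2 := k.2
      exact hjk (Fin.ext (by omega))

lemma aux_eval_neg (hsym : ∀ j k, lam j k = lam k j) (r' : Fin n → ℝ)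
    (hr' : ∀ i, r' i = -r i) :
    ∀ A : Finset (Fin n), ∀ x : ℝ,
      (mu r lam A).eval (-x) = (-1 : ℝ) ^ A.card * (mu r' lam A).eval x := by
  intro A
  induction A using Finset.strongInduction with
  | _ A ih =>
    intro x
    rcases A.eq_empty_or_nonempty with rfl | ⟨v, hv⟩
    · simp [aux_mu_empty]
    · have hvsub := Finset.erase_ssubset hv
      have hm : A.card = (A.erase v).card + 1 := (Finset.card_erase_add_one hv).symm
      rw [aux_eval_rec r lam hsym hv, aux_eval_rec r' lam hsym hv, ih _ hvsub x, hm]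
      have hterm : ∀ k ∈ A.erase v,
          lam v k * (mu r lam ((A.erase v).erase k)).eval (-x)
          = (-1:ℝ) ^ ((A.erase v).card + 1)
            * (lam v k * (mu r' lam ((A.erase v).erase k)).eval x) := by
        intro k hk
        have hksub : (A.erase v).erase k ⊂ A :=
          lt_of_le_of_lt (Finset.erase_subset _ _) hvsub
        have hpk : ((A.erase v).erase k).card + 1 = (A.erase v).card :=
          Finset.card_erase_add_one hk
        rw [ih _ hksub x, ← hpk]
        ring
      rw [Finset.sum_congr rfl hterm, ← Finset.mul_sum, hr' v]
      ring

/-- Positivity of `μ` strictly to the right of the root interval. -/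
lemma aux_upper (hn : 0 < n) (hsym : ∀ j k, lam j k = lam k j)
    (hnonpos : ∀ j k, lam j k ≤ 0) (x : ℝ)
    (hx : ∀ i, r i + 2 * Real.sqrt (BG n lam) < x) :
    0 < (mu r lam (Finset.univ : Finset (Fin n))).eval x := by
  have hB0 : 0 ≤ BG n lam := aux_BG_nonneg lam hn hnonpos
  by_cases hB : BG n lam = 0
  · rw [aux_mu_lam_zero r lam (aux_BG_zero lam hsym hnonpos hB), eval_prod]
    apply Finset.prod_pos
    intro i _
    have := hx i
    rw [hB, Real.sqrt_zero] at this
    simp only [eval_sub, eval_X, eval_C]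
    linarith
  · have hBpos : 0 < BG n lam := lt_of_le_of_ne hB0 (Ne.symm hB)
    obtain ⟨s, hsdef⟩ : ∃ s, s = Real.sqrt (BG n lam) := ⟨_, rfl⟩
    have hs : 0 < s := hsdef ▸ Real.sqrt_pos.mpr hBpos
    have hsB : s * s = BG n lam := hsdef ▸ Real.mul_self_sqrt hB0
    have hx : ∀ i, r i + 2 * s < x := fun i => by rw [hsdef]; exact hx i
    rcases le_or_gt 3 n with hn3 | hn3
    · -- n ≥ 3
      set v : Fin n := ⟨0, hn⟩
      have hkey := aux_key_real r lam hsym hnonpos hs hsB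
        (fun w S hw hS => aux_le_BG lam hn3 hnonpos w S hw hS) hx
      have hcardu : (Finset.univ.erase v : Finset (Fin n)).card = n - 1 := by
        rw [Finset.card_erase_of_mem (Finset.mem_univ v), Finset.card_univ, Fintype.card_fin]
      have hcv : (Finset.univ.erase v : Finset (Fin n)).card < n := by omega
      have hQvpos : 0 < (mu r lam (Finset.univ.erase v)).eval x := (hkey _ hcv).1
      have hQvk : ∀ k ∈ Finset.univ.erase v,
          0 < (mu r lam ((Finset.univ.erase v).erase k)).eval x ∧
          (mu r lam ((Finset.univ.erase v).erase k)).eval x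
            ≤ (mu r lam (Finset.univ.erase v)).eval x / s := by
        intro k hk
        have hck : ((Finset.univ.erase v).erase k).card ≤ n - 2 := by
          have := Finset.card_erase_of_mem hk; omega
        have hck' : ((Finset.univ.erase v).erase k).card < n := by omega
        refine ⟨(hkey _ hck').1, ?_⟩
        have hb := (hkey _ hcv).2 k hk
        have hT := aux_le_BG lam hn3 hnonpos k _ (Finset.notMem_erase k _) hck
        have hdl : (∑ m ∈ (Finset.univ.erase v).erase k, -lam k m) / s ≤ s := by
          calc (∑ m ∈ (Finset.univ.erase v).erase k, -lam k m) / s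
              ≤ BG n lam / s := (div_le_div_iff_of_pos_right hs).mpr hT
            _ = s := by rw [← hsB, mul_div_assoc, div_self hs.ne', mul_one]
        have hc : s ≤ x - r k - (∑ m ∈ (Finset.univ.erase v).erase k, -lam k m) / s := by
          linarith [hx k]
        rw [le_div_iff₀ hs]
        calc (mu r lam ((Finset.univ.erase v).erase k)).eval x * s
            = s * (mu r lam ((Finset.univ.erase v).erase k)).eval x := mul_comm _ _
          _ ≤ (x - r k - (∑ m ∈ (Finset.univ.erase v).erase k, -lam k m) / s)
              * (mu r lam ((Finset.univ.erase v).erase k)).eval x :=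
            mul_le_mul_of_nonneg_right hc (le_of_lt (hkey _ hck').1)
          _ ≤ _ := hb
      -- the degree sum bound ∑ ≤ 2B
      obtain ⟨k0, hk0⟩ : (Finset.univ.erase v).Nonempty := by
        rw [← Finset.card_pos, hcardu]; omega
      have h2B : (∑ k ∈ Finset.univ.erase v, -lam v k) ≤ 2 * BG n lam := by
        rw [← Finset.add_sum_erase _ _ hk0]
        have h1 : -lam v k0 ≤ BG n lam := by
          have h := aux_le_BG lam hn3 hnonpos v {k0}
            (by simp [Finset.mem_singleton]
                exact fun h => (Finset.mem_erase.mp hk0).1 h.symm)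
            (by simp; omega)
          simpa using h
        have h2 : (∑ k ∈ (Finset.univ.erase v).erase k0, -lam v k) ≤ BG n lam := by
          refine aux_le_BG lam hn3 hnonpos v _ ?_ ?_
          · exact fun h => (Finset.notMem_erase v Finset.univ)
              (Finset.mem_of_mem_erase h)
          · have := Finset.card_erase_of_mem hk0; omega
        linarith
      have hsumle : ∑ k ∈ Finset.univ.erase v,
          (-lam v k) * (mu r lam ((Finset.univ.erase v).erase k)).eval x
          ≤ 2 * s * (mu r lam (Finset.univ.erase v)).eval x := by
        calc ∑ k ∈ Finset.univ.erase v,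
            (-lam v k) * (mu r lam ((Finset.univ.erase v).erase k)).eval x
            ≤ ∑ k ∈ Finset.univ.erase v,
              (-lam v k) * ((mu r lam (Finset.univ.erase v)).eval x / s) :=
              Finset.sum_le_sum fun k hk =>
                mul_le_mul_of_nonneg_left (hQvk k hk).2 (by linarith [hnonpos v k])
          _ = (∑ k ∈ Finset.univ.erase v, -lam v k)
              * ((mu r lam (Finset.univ.erase v)).eval x / s) :=
              (Finset.sum_mul _ _ _).symm
          _ ≤ (2 * BG n lam) * ((mu r lam (Finset.univ.erase v)).eval x / s) := by
              apply mul_le_mul_of_nonneg_right h2B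
              positivity
          _ = 2 * s * (mu r lam (Finset.univ.erase v)).eval x := by
              rw [← hsB]; field_simp
      have hrec := aux_eval_rec r lam hsym (Finset.mem_univ v) x
      have hneg : ∑ k ∈ Finset.univ.erase v,
          lam v k * (mu r lam ((Finset.univ.erase v).erase k)).eval x
          = -∑ k ∈ Finset.univ.erase v,
            (-lam v k) * (mu r lam ((Finset.univ.erase v).erase k)).eval x := by
        rw [← Finset.sum_neg_distrib]
        exact Finset.sum_congr rfl fun k _ => by ring
      rw [hrec, hneg]
      have hxv := hx v
      nlinarith [hQvpos]
    · -- n = 1 or n = 2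
      have hn12 : n = 1 ∨ n = 2 := by omega
      rcases hn12 with rfl | rfl
      · -- n = 1 : BG = 0, contradiction with hBpos
        exfalso
        rw [BG] at hBpos
        norm_num at hBpos
      · -- n = 2
        have hB2 : BG 2 lam = -lam ⟨0, by omega⟩ ⟨1, by omega⟩ / 4 := by
          rw [BG, if_neg (by omega), dif_pos rfl]
        set v0 : Fin 2 := ⟨0, by omega⟩
        set v1 : Fin 2 := ⟨1, by omega⟩
        have huniv : (Finset.univ : Finset (Fin 2)).erase v0 = {v1} := by ext i; fin_cases i <;> simp [v0, v1]
        have hrec := aux_eval_rec r lam hsym (Finset.mem_univ v0) x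
        rw [huniv, Finset.sum_singleton, Finset.erase_singleton, aux_mu_empty,
          aux_mu_singleton r lam hsym v1] at hrec
        simp only [eval_one, eval_sub, eval_X, eval_C, mul_one] at hrec
        rw [hrec]
        have hl : lam v0 v1 = -(4 * (s * s)) := by
          rw [hsB]
          have : BG 2 lam = -lam v0 v1 / 4 := hB2
          linarith
        rw [hl]
        have h0 := hx v0
        have h1 := hx v1
        nlinarith

end AuxMatching

/-- all roots of the weighted matching polynomial `μ(G)` are real and lie in
`[min_j r_j − 2√(B_G), max_j r_j + 2√(B_G)]`. -/
theorem stmt_1 (n : ℕ) (hn : 0 < n) (r : Fin n → ℝ) (lam : Fin n → Fin n → ℝ)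
    (hsym : ∀ j k, lam j k = lam k j) (hnonpos : ∀ j k, lam j k ≤ 0)
    (hdiag : ∀ i, lam i i = 0) :
    ∀ z : ℂ, (Polynomial.aeval z) (mu r lam (Finset.univ : Finset (Fin n))) = 0 →
      z.im = 0 ∧
      Finset.univ.inf' (Finset.univ_nonempty_iff.mpr ⟨⟨0, hn⟩⟩) r
          - 2 * Real.sqrt (BG n lam) ≤ z.re ∧
      z.re ≤ Finset.univ.sup' (Finset.univ_nonempty_iff.mpr ⟨⟨0, hn⟩⟩) r
          + 2 * Real.sqrt (BG n lam) := by
  intro z hz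
  have him : z.im = 0 := by
    by_contra him0
    rcases lt_or_gt_of_ne him0 with hlt | hgt
    · have hconj : aeval ((starRingEnd ℂ) z) (mu r lam (Finset.univ : Finset (Fin n))) = 0 := by
        rw [Polynomial.aeval_conj, hz, map_zero]
      have hpos : 0 < ((starRingEnd ℂ) z).im := by
        rw [Complex.conj_im]; linarith
      exact (aux_key_complex r lam hsym hnonpos _ hpos Finset.univ).1 hconj
    · exact (aux_key_complex r lam hsym hnonpos z hgt Finset.univ).1 hz
  have hzre : z = ((z.re : ℝ) : ℂ) := Complex.ext (by simp) (by simp [him])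
  have heval : (mu r lam (Finset.univ : Finset (Fin n))).eval z.re = 0 := by
    have hcast := Polynomial.aeval_ofReal (K := ℂ) (mu r lam Finset.univ) z.re
    rw [show (RCLike.ofReal (K := ℂ) z.re) = ((z.re : ℝ) : ℂ) from rfl] at hcast
    rw [hzre, hcast] at hz
    exact RCLike.ofReal_eq_zero.mp hz
  have hB0 : 0 ≤ BG n lam := aux_BG_nonneg lam hn hnonpos
  refine ⟨him, ?_, ?_⟩
  · by_contra hlow
    push_neg at hlow
    have hx : ∀ i : Fin n, (fun i => -r i) i + 2 * Real.sqrt (BG n lam) < -z.re := by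
      intro i
      have hinf : Finset.univ.inf' (Finset.univ_nonempty_iff.mpr ⟨⟨0, hn⟩⟩) r ≤ r i :=
        Finset.inf'_le r (Finset.mem_univ i)
      simp only
      linarith
    have hup := aux_upper (fun i => -r i) lam hn hsym hnonpos (-z.re) hx
    have hneg := aux_eval_neg r lam hsym (fun i => -r i) (fun i => rfl)
      Finset.univ (-z.re)
    rw [neg_neg, heval] at hneg
    exact mul_ne_zero (pow_ne_zero _ (by norm_num : (-1:ℝ) ≠ 0)) (ne_of_gt hup) hneg.symm
  · by_contra hupb
    push_neg at hupb
    have hx : ∀ i : Fin n, r i + 2 * Real.sqrt (BG n lam) < z.re := by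
      intro i
      have hsup : r i ≤ Finset.univ.sup' (Finset.univ_nonempty_iff.mpr ⟨⟨0, hn⟩⟩) r :=
        Finset.le_sup' r (Finset.mem_univ i)
      linarith
    have hup := aux_upper r lam hn hsym hnonpos z.re hx
    rw [heval] at hup
    exact lt_irrefl 0 hup
end

section
/- (Contraction lemma) For any weighted graph G and any two distinct vertices i and j, the identity of rational functions α_i(G) = α_i(G∖j) + λ_{i∼j}/α_j(G∖i) holds; explicitly, μ(G)/μ(G∖i) = μ(G∖j)/μ(G∖{i,j}) + λ_{i∼j} · μ(G∖{i,j})/μ(G∖i), where λ_{i∼j} = −(Σ_{c ∈ [i→j]} λ_c · μ(G∖c)²)/μ(G∖{i,j})². -/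
open Polynomial
open scoped Classical

section ContractionAux

variable {n : ℕ}

lemma mem_mVerts {M : Finset (Fin n × Fin n)} {v : Fin n} :
    v ∈ mVerts M ↔ ∃ e ∈ M, e.1 = v ∨ e.2 = v := by
  simp only [mVerts, Finset.mem_union, Finset.mem_image]
  constructor
  · rintro (⟨e, he, h⟩ | ⟨e, he, h⟩) <;> exact ⟨e, he, by tauto⟩
  · rintro ⟨e, he, (h | h)⟩
    · exact Or.inl ⟨e, he, h⟩
    · exact Or.inr ⟨e, he, h⟩

lemma mem_matchings {lam : Fin n → Fin n → ℝ} {A : Finset (Fin n)}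
    {M : Finset (Fin n × Fin n)} : M ∈ matchings lam A ↔ IsMatching lam A M := by
  simp [matchings]

lemma mVerts_subset {lam : Fin n → Fin n → ℝ} {A : Finset (Fin n)}
    {M : Finset (Fin n × Fin n)} (h : IsMatching lam A M) : mVerts M ⊆ A := by
  intro v hv
  rw [mem_mVerts] at hv
  obtain ⟨e, he, (h1 | h1)⟩ := hv
  · exact h1 ▸ (h.1 e he).2.2.1
  · exact h1 ▸ (h.1 e he).2.2.2

lemma mu_monic (r : Fin n → ℝ) (lam : Fin n → Fin n → ℝ) (A : Finset (Fin n)) :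
    (mu r lam A).Monic := by
  have h0 : (∅ : Finset (Fin n × Fin n)) ∈ matchings lam A := by
    simp [matchings, IsMatching]
  rw [mu, ← Finset.add_sum_erase _ _ h0]
  have hterm : (∏ i ∈ A \ mVerts (∅ : Finset (Fin n × Fin n)), (X - C (r i))) *
      C (∏ e ∈ (∅ : Finset (Fin n × Fin n)), lam e.1 e.2) = ∏ i ∈ A, (X - C (r i)) := by
    simp [mVerts]
  rw [hterm]
  have hmono : (∏ i ∈ A, (X - C (r i))).Monic :=
    monic_prod_of_monic _ _ fun i _ => monic_X_sub_C _
  have hdegp : ∀ s : Finset (Fin n), (∏ i ∈ s, (X - C (r i))).degree = (s.card : WithBot ℕ) := by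
    intro s
    rw [degree_prod]
    simp [degree_X_sub_C]
  refine hmono.add_of_left ?_
  refine lt_of_le_of_lt (degree_sum_le _ _) ?_
  rw [hdegp A, Finset.sup_lt_iff (by exact_mod_cast WithBot.bot_lt_coe _)]
  intro M hM
  rw [Finset.mem_erase, mem_matchings] at hM
  obtain ⟨hne, hMm⟩ := hM
  have hsub : mVerts M ⊆ A := mVerts_subset hMm
  have hnonempty : (mVerts M).Nonempty := by
    obtain ⟨e, he⟩ := Finset.nonempty_iff_ne_empty.mpr hne
    exact ⟨e.1, mem_mVerts.mpr ⟨e, he, Or.inl rfl⟩⟩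
  have hlt : (A \ mVerts M).card < A.card :=
    Finset.card_lt_card (Finset.sdiff_ssubset hsub hnonempty)
  calc ((∏ i ∈ A \ mVerts M, (X - C (r i))) * C (∏ e ∈ M, lam e.1 e.2)).degree
      ≤ (∏ i ∈ A \ mVerts M, (X - C (r i))).degree + (C (∏ e ∈ M, lam e.1 e.2)).degree :=
        degree_mul_le _ _
    _ ≤ ((A \ mVerts M).card : WithBot ℕ) + 0 := add_le_add (le_of_eq (hdegp _)) degree_C_le
    _ = ((A \ mVerts M).card : WithBot ℕ) := add_zero _
    _ < (A.card : WithBot ℕ) := by exact_mod_cast hlt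

lemma mu_ne_zero (r : Fin n → ℝ) (lam : Fin n → Fin n → ℝ) (A : Finset (Fin n)) :
    mu r lam A ≠ 0 := (mu_monic r lam A).ne_zero

end ContractionAux

section ExpandAux

variable {n : ℕ}

/-- the ordered pair for the edge {i,w} -/
def sortPair (i w : Fin n) : Fin n × Fin n := if i < w then (i, w) else (w, i)

lemma sortPair_cases {i w : Fin n} (h : i ≠ w) :
    (sortPair i w = (i, w) ∧ i < w) ∨ (sortPair i w = (w, i) ∧ w < i) := by
  rcases lt_or_gt_of_ne h with h1 | h1
  · exact Or.inl ⟨by simp [sortPair, h1], h1⟩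
  · exact Or.inr ⟨by simp [sortPair, not_lt_of_gt h1], h1⟩

lemma mem_sortPair_iff {i w v : Fin n} (h : i ≠ w) :
    ((sortPair i w).1 = v ∨ (sortPair i w).2 = v) ↔ (v = i ∨ v = w) := by
  rcases sortPair_cases h with ⟨he, _⟩ | ⟨he, _⟩ <;> rw [he] <;> constructor <;>
    rintro (rfl | rfl) <;> tauto

lemma mVerts_insert {e : Fin n × Fin n} {M : Finset (Fin n × Fin n)} :
    mVerts (insert e M) = insert e.1 (insert e.2 (mVerts M)) := by
  ext v
  simp only [mem_mVerts, Finset.mem_insert]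
  constructor
  · rintro ⟨f, (rfl | hf), h⟩
    · tauto
    · exact Or.inr (Or.inr ⟨f, hf, h⟩)
  · rintro (rfl | rfl | ⟨f, hf, h⟩)
    · exact ⟨e, Or.inl rfl, Or.inl rfl⟩
    · exact ⟨e, Or.inl rfl, Or.inr rfl⟩
    · exact ⟨f, Or.inr hf, h⟩

set_option maxHeartbeats 1600000 in
lemma mu_expand (r : Fin n → ℝ) {lam : Fin n → Fin n → ℝ}
    (hsym : ∀ j k, lam j k = lam k j) {A : Finset (Fin n)} {i : Fin n} (hi : i ∈ A) :
    mu r lam A = (X - C (r i)) * mu r lam (A.erase i)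
      + ∑ w ∈ A.erase i, C (lam i w) * mu r lam ((A.erase i).erase w) := by
  have hfilter : (matchings lam A).filter (fun M => ¬ i ∈ mVerts M)
      = matchings lam (A.erase i) := by
    ext M
    simp only [Finset.mem_filter, mem_matchings]
    constructor
    · rintro ⟨⟨h1, h2⟩, hv⟩
      refine ⟨fun e he => ?_, h2⟩
      obtain ⟨hlt, hne, he1, he2⟩ := h1 e he
      refine ⟨hlt, hne, Finset.mem_erase.mpr ⟨?_, he1⟩, Finset.mem_erase.mpr ⟨?_, he2⟩⟩
      · rintro rfl; exact hv (mem_mVerts.mpr ⟨e, he, Or.inl rfl⟩)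
      · rintro rfl; exact hv (mem_mVerts.mpr ⟨e, he, Or.inr rfl⟩)
    · rintro ⟨h1, h2⟩
      refine ⟨⟨fun e he => ?_, h2⟩, fun hv => ?_⟩
      · obtain ⟨hlt, hne, he1, he2⟩ := h1 e he
        exact ⟨hlt, hne, Finset.mem_of_mem_erase he1, Finset.mem_of_mem_erase he2⟩
      · obtain ⟨e, he, (h | h)⟩ := mem_mVerts.mp hv
        · exact Finset.notMem_erase i A (h ▸ (h1 e he).2.2.1)
        · exact Finset.notMem_erase i A (h ▸ (h1 e he).2.2.2)
  have hpart1 : ∑ M ∈ (matchings lam A).filter (fun M => ¬ i ∈ mVerts M),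
        (∏ v ∈ A \ mVerts M, (X - C (r v))) * C (∏ e ∈ M, lam e.1 e.2)
      = (X - C (r i)) * mu r lam (A.erase i) := by
    rw [hfilter, mu, Finset.mul_sum]
    refine Finset.sum_congr rfl fun M hM => ?_
    rw [mem_matchings] at hM
    have hiM : i ∈ A \ mVerts M := by
      refine Finset.mem_sdiff.mpr ⟨hi, fun hv => ?_⟩
      obtain ⟨e, he, (h | h)⟩ := mem_mVerts.mp hv
      · exact Finset.notMem_erase i A (h ▸ (hM.1 e he).2.2.1)
      · exact Finset.notMem_erase i A (h ▸ (hM.1 e he).2.2.2)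
    have hset : (A \ mVerts M).erase i = (A.erase i) \ mVerts M := by
      ext v
      simp only [Finset.mem_erase, Finset.mem_sdiff]
      tauto
    rw [← Finset.mul_prod_erase _ _ hiM, hset, mul_assoc]
  have hpart2 : ∑ M ∈ (matchings lam A).filter (fun M => i ∈ mVerts M),
        (∏ v ∈ A \ mVerts M, (X - C (r v))) * C (∏ e ∈ M, lam e.1 e.2)
      = ∑ w ∈ A.erase i, C (lam i w) * mu r lam ((A.erase i).erase w) := by
    rw [← Finset.sum_filter_of_ne (p := fun w => lam i w ≠ 0)
      (fun w _ h => fun h0 => h (by simp [h0]))]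
    have : ∀ w ∈ (A.erase i).filter (fun w => lam i w ≠ 0),
        C (lam i w) * mu r lam ((A.erase i).erase w)
          = ∑ M' ∈ matchings lam ((A.erase i).erase w),
              C (lam i w) * ((∏ v ∈ ((A.erase i).erase w) \ mVerts M', (X - C (r v)))
                * C (∏ e ∈ M', lam e.1 e.2)) := by
      intro w _
      rw [mu, Finset.mul_sum]
    rw [Finset.sum_congr rfl this, Finset.sum_sigma']
    refine (Finset.sum_nbij (fun p => insert (sortPair i p.1) p.2) ?_ ?_ ?_ ?_).symm
    · -- maps to
      rintro ⟨w, M'⟩ hp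
      simp only [Finset.mem_sigma, Finset.mem_filter, mem_matchings] at hp
      obtain ⟨⟨hwA, hlw⟩, hM'⟩ := hp
      have hwi : i ≠ w := fun h => (Finset.mem_erase.mp hwA).1 h.symm
      have hends : ∀ e ∈ M', e.1 ≠ i ∧ e.1 ≠ w ∧ e.2 ≠ i ∧ e.2 ≠ w := by
        intro e he
        obtain ⟨_, _, he1, he2⟩ := hM'.1 e he
        rw [Finset.mem_erase, Finset.mem_erase] at he1 he2
        exact ⟨he1.2.1, he1.1, he2.2.1, he2.1⟩
      have hq : sortPair i w ∉ M' := by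
        intro hq
        rcases sortPair_cases hwi with ⟨he, _⟩ | ⟨he, _⟩ <;> rw [he] at hq
        · exact (hends _ hq).1 rfl
        · exact (hends _ hq).2.2.1 rfl
      simp only [Finset.mem_filter, mem_matchings]
      constructor
      · constructor
        · intro e he
          rcases Finset.mem_insert.mp he with rfl | he'
          · rcases sortPair_cases hwi with ⟨he2, hlt⟩ | ⟨he2, hlt⟩ <;> rw [he2]
            · exact ⟨hlt, hlw, hi, Finset.mem_of_mem_erase hwA⟩
            · exact ⟨hlt, by rwa [← hsym i w], Finset.mem_of_mem_erase hwA, hi⟩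
          · obtain ⟨hlt, hne, he1, he2⟩ := hM'.1 e he'
            exact ⟨hlt, hne, Finset.mem_of_mem_erase (Finset.mem_of_mem_erase he1),
              Finset.mem_of_mem_erase (Finset.mem_of_mem_erase he2)⟩
        · intro e he f hf hef
          rcases Finset.mem_insert.mp he with rfl | he' <;>
            rcases Finset.mem_insert.mp hf with rfl | hf'
          · exact absurd rfl hef
          · obtain ⟨h1, h2, h3, h4⟩ := hends f hf'
            rcases sortPair_cases hwi with ⟨he2, _⟩ | ⟨he2, _⟩ <;> rw [he2] <;>
              exact ⟨by tauto, by tauto, by tauto, by tauto⟩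
          · obtain ⟨h1, h2, h3, h4⟩ := hends e he'
            rcases sortPair_cases hwi with ⟨he2, _⟩ | ⟨he2, _⟩ <;> rw [he2] <;>
              exact ⟨by tauto, by tauto, by tauto, by tauto⟩
          · exact hM'.2 e he' f hf' hef
      · rcases sortPair_cases hwi with ⟨he2, _⟩ | ⟨he2, _⟩ <;>
          refine mem_mVerts.mpr ⟨sortPair i w, Finset.mem_insert_self _ _, ?_⟩ <;>
          rw [he2] <;> simp
    · -- injective
      rintro ⟨w, M'⟩ hp ⟨w', M''⟩ hp' heq
      dsimp only at heq
      simp only [Finset.coe_filter, Finset.mem_sigma, Finset.mem_filter, mem_matchings,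
        Set.mem_setOf_eq, Finset.mem_coe] at hp hp'
      obtain ⟨⟨hwA, hlw⟩, hM'⟩ := hp
      obtain ⟨⟨hwA', hlw'⟩, hM''⟩ := hp'
      have hwi : i ≠ w := fun h => (Finset.mem_erase.mp hwA).1 h.symm
      have hwi' : i ≠ w' := fun h => (Finset.mem_erase.mp hwA').1 h.symm
      have hends : ∀ (N : Finset (Fin n × Fin n)) (u : Fin n),
          IsMatching lam ((A.erase i).erase u) N → ∀ e ∈ N, e.1 ≠ i ∧ e.2 ≠ i := by
        intro N u hN e he
        obtain ⟨_, _, he1, he2⟩ := hN.1 e he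
        rw [Finset.mem_erase, Finset.mem_erase] at he1 he2
        exact ⟨he1.2.1, he2.2.1⟩
      have hji : (sortPair i w).1 = i ∨ (sortPair i w).2 = i :=
        (mem_sortPair_iff hwi).mpr (Or.inl rfl)
      have hq' : sortPair i w ∈ insert (sortPair i w') M'' :=
        heq ▸ Finset.mem_insert_self _ _
      have hqq : sortPair i w = sortPair i w' := by
        rcases Finset.mem_insert.mp hq' with h | h
        · exact h
        · exfalso; rcases hji with h1 | h1
          · exact (hends M'' w' hM'' _ h).1 h1
          · exact (hends M'' w' hM'' _ h).2 h1
      have hww : w = w' := by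
        rcases sortPair_cases hwi with ⟨he, _⟩ | ⟨he, _⟩ <;>
          rcases sortPair_cases hwi' with ⟨he', _⟩ | ⟨he', _⟩ <;>
          rw [he, he'] at hqq <;>
          simp only [Prod.mk.injEq] at hqq
        · exact hqq.2
        · exact absurd hqq.2.symm hwi
        · exact absurd hqq.1.symm hwi
        · exact hqq.1
      subst hww
      have hnotin : sortPair i w ∉ M' := fun hq => by
        rcases hji with h1 | h1
        · exact (hends M' w hM' _ hq).1 h1
        · exact (hends M' w hM' _ hq).2 h1
      have hnotin' : sortPair i w ∉ M'' := fun hq => by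
        rcases hji with h1 | h1
        · exact (hends M'' w hM'' _ hq).1 h1
        · exact (hends M'' w hM'' _ hq).2 h1
      have hMM : M' = M'' := by
        rw [← Finset.erase_insert hnotin, ← Finset.erase_insert hnotin', heq]
      simp [hMM]
    · -- surjective
      intro M hM
      simp only [Finset.coe_filter, Set.mem_setOf_eq, mem_matchings] at hM
      obtain ⟨hMm, hiM⟩ := hM
      obtain ⟨e, he, hie⟩ := mem_mVerts.mp hiM
      obtain ⟨hlt, hlne, he1, he2⟩ := hMm.1 e he
      have hother : ∀ f ∈ M.erase e, f.1 ≠ e.1 ∧ f.1 ≠ e.2 ∧ f.2 ≠ e.1 ∧ f.2 ≠ e.2 := by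
        intro f hf
        obtain ⟨hfe, hfM⟩ := Finset.mem_erase.mp hf
        have := hMm.2 e he f hfM (Ne.symm hfe)
        tauto
      rcases hie with hie | hie
      · -- e = (i, w) with w = e.2
        refine ⟨⟨e.2, M.erase e⟩, ?_, ?_⟩
        · simp only [Finset.mem_coe, Finset.mem_sigma, Finset.mem_filter, mem_matchings]
          refine ⟨⟨Finset.mem_erase.mpr ⟨by rw [← hie]; exact (ne_of_lt hlt).symm, he2⟩,
            by rwa [hie] at hlne⟩, ⟨fun f hf => ?_, fun f hf g hg hfg =>
              hMm.2 f (Finset.mem_of_mem_erase hf) g (Finset.mem_of_mem_erase hg) hfg⟩⟩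
          obtain ⟨h1, h2, h3, h4⟩ := hother f hf
          obtain ⟨hl, hn, hf1, hf2⟩ := hMm.1 f (Finset.mem_of_mem_erase hf)
          rw [hie] at h1 h3
          exact ⟨hl, hn, Finset.mem_erase.mpr ⟨h2, Finset.mem_erase.mpr ⟨h1, hf1⟩⟩,
            Finset.mem_erase.mpr ⟨h4, Finset.mem_erase.mpr ⟨h3, hf2⟩⟩⟩
        · show insert (sortPair i e.2) (M.erase e) = M
          have hsp : sortPair i e.2 = e := by
            have h2 : i < e.2 := hie ▸ hlt
            rw [sortPair, if_pos h2, ← hie]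
          rw [hsp]; exact Finset.insert_erase he
      · -- e = (w, i) with w = e.1
        refine ⟨⟨e.1, M.erase e⟩, ?_, ?_⟩
        · simp only [Finset.mem_coe, Finset.mem_sigma, Finset.mem_filter, mem_matchings]
          refine ⟨⟨Finset.mem_erase.mpr ⟨by rw [← hie]; exact (ne_of_lt hlt), he1⟩,
            by rw [hsym]; rwa [hie] at hlne⟩, ⟨fun f hf => ?_, fun f hf g hg hfg =>
              hMm.2 f (Finset.mem_of_mem_erase hf) g (Finset.mem_of_mem_erase hg) hfg⟩⟩
          obtain ⟨h1, h2, h3, h4⟩ := hother f hf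
          obtain ⟨hl, hn, hf1, hf2⟩ := hMm.1 f (Finset.mem_of_mem_erase hf)
          rw [hie] at h2 h4
          exact ⟨hl, hn, Finset.mem_erase.mpr ⟨h1, Finset.mem_erase.mpr ⟨h2, hf1⟩⟩,
            Finset.mem_erase.mpr ⟨h3, Finset.mem_erase.mpr ⟨h4, hf2⟩⟩⟩
        · show insert (sortPair i e.1) (M.erase e) = M
          have hsp : sortPair i e.1 = e := by
            have h2 : e.1 < i := hie ▸ hlt
            rw [sortPair, if_neg (not_lt_of_gt h2), ← hie]
          rw [hsp]; exact Finset.insert_erase he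
    · -- values
      rintro ⟨w, M'⟩ hp
      dsimp only
      simp only [Finset.mem_sigma, Finset.mem_filter, mem_matchings] at hp
      obtain ⟨⟨hwA, hlw⟩, hM'⟩ := hp
      have hwi : i ≠ w := fun h => (Finset.mem_erase.mp hwA).1 h.symm
      have hends : ∀ e ∈ M', e.1 ≠ i ∧ e.1 ≠ w ∧ e.2 ≠ i ∧ e.2 ≠ w := by
        intro e he
        obtain ⟨_, _, he1, he2⟩ := hM'.1 e he
        rw [Finset.mem_erase, Finset.mem_erase] at he1 he2
        exact ⟨he1.2.1, he1.1, he2.2.1, he2.1⟩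
      have hq : sortPair i w ∉ M' := by
        intro hq
        rcases sortPair_cases hwi with ⟨he, _⟩ | ⟨he, _⟩ <;> rw [he] at hq
        · exact (hends _ hq).1 rfl
        · exact (hends _ hq).2.2.1 rfl
      have hset : A \ mVerts (insert (sortPair i w) M')
          = ((A.erase i).erase w) \ mVerts M' := by
        rw [mVerts_insert]
        ext v
        have hv : (v = (sortPair i w).1 ∨ v = (sortPair i w).2) ↔ (v = i ∨ v = w) := by
          rcases sortPair_cases hwi with ⟨he, _⟩ | ⟨he, _⟩ <;> rw [he] <;> simp [or_comm]
        simp only [Finset.mem_sdiff, Finset.mem_insert, Finset.mem_erase]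
        tauto
      have hlam : lam (sortPair i w).1 (sortPair i w).2 = lam i w := by
        rcases sortPair_cases hwi with ⟨he, _⟩ | ⟨he, _⟩ <;> rw [he]
        exact (hsym i w).symm
      have hprod : ∏ e ∈ insert (sortPair i w) M', lam e.1 e.2
          = lam i w * ∏ e ∈ M', lam e.1 e.2 := by
        rw [Finset.prod_insert hq, hlam]
      rw [hset, hprod, map_mul]
      ring
  rw [mu, ← Finset.sum_filter_add_sum_filter_not (matchings lam A) (fun M => i ∈ mVerts M),
    hpart2, hpart1]
  ring

end ExpandAux

section PathAux

variable {n : ℕ}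

lemma pathSet_finite (lam : Fin n → Fin n → ℝ) (A : Finset (Fin n)) (i j : Fin n) :
    {l : List (Fin n) | IsPathIn lam A i j l}.Finite := by
  apply (List.finite_length_le (Fin n) n).subset
  intro l hl
  simpa using hl.2.1.length_le_card

/-- The path-sum polynomial `∑_{c : i → j} λ_c μ(A∖c)²`. -/
noncomputable def PS (r : Fin n → ℝ) (lam : Fin n → Fin n → ℝ) (A : Finset (Fin n))
    (i j : Fin n) : Polynomial ℝ :=
  ∑ l ∈ (pathSet_finite lam A i j).toFinset,
    C (pathWeight lam l) * mu r lam (A \ l.toFinset) ^ 2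

lemma getLast?_cons_of_ne_nil {α : Type*} {a : α} {l : List α} (h : l ≠ []) :
    (a :: l).getLast? = l.getLast? := by
  cases l with
  | nil => exact absurd rfl h
  | cons b t => exact List.getLast?_cons_cons

lemma path_self {lam : Fin n → Fin n → ℝ} {A : Finset (Fin n)} {j : Fin n} (hj : j ∈ A)
    {l : List (Fin n)} : IsPathIn lam A j j l ↔ l = [j] := by
  constructor
  · rintro ⟨hne, hnd, hA, hhead, hlast, hch⟩
    cases l with
    | nil => exact absurd rfl hne
    | cons a t =>
      simp only [List.head?_cons, Option.some.injEq] at hhead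
      subst hhead
      cases t with
      | nil => rfl
      | cons b t' =>
        exfalso
        rw [getLast?_cons_of_ne_nil (List.cons_ne_nil b t')] at hlast
        have hmem : a ∈ b :: t' := by
          have := List.mem_of_mem_getLast? (by rw [hlast]; exact rfl)
          exact this
        exact (List.nodup_cons.mp hnd).1 hmem
  · rintro rfl
    exact ⟨List.cons_ne_nil _ _, List.nodup_singleton _, by simpa using hj, rfl, rfl,
      List.isChain_singleton _⟩

lemma PS_self (r : Fin n → ℝ) (lam : Fin n → Fin n → ℝ) {A : Finset (Fin n)} {j : Fin n}
    (hj : j ∈ A) : PS r lam A j j = mu r lam (A.erase j) ^ 2 := by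
  have hfs : (pathSet_finite lam A j j).toFinset = {[j]} := by
    ext l
    simp [Set.Finite.mem_toFinset, path_self hj]
  rw [PS, hfs, Finset.sum_singleton]
  have h1 : pathWeight lam [j] = 1 := by simp [pathWeight]
  have h2 : A \ [j].toFinset = A.erase j := by
    simp [Finset.sdiff_singleton_eq_erase]
  rw [h1, h2, map_one, one_mul]

lemma PS_decomp (r : Fin n → ℝ) {lam : Fin n → Fin n → ℝ} {A : Finset (Fin n)}
    {i j : Fin n} (hij : i ≠ j) (hi : i ∈ A) :
    PS r lam A i j = ∑ w ∈ A.erase i, C (-lam i w) * PS r lam (A.erase i) w j := by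
  rw [← Finset.sum_filter_of_ne (p := fun w => lam i w ≠ 0)
    (fun w _ h => fun h0 => h (by simp [h0]))]
  have hPS : ∀ w ∈ (A.erase i).filter (fun w => lam i w ≠ 0),
      C (-lam i w) * PS r lam (A.erase i) w j
        = ∑ l ∈ (pathSet_finite lam (A.erase i) w j).toFinset,
            C (-lam i w) * (C (pathWeight lam l) * mu r lam ((A.erase i) \ l.toFinset) ^ 2) := by
    intro w _
    rw [PS, Finset.mul_sum]
  rw [Finset.sum_congr rfl hPS, Finset.sum_sigma']
  rw [PS]
  refine (Finset.sum_nbij (fun p => i :: p.2) ?_ ?_ ?_ ?_).symm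
  · -- maps to
    rintro ⟨w, l⟩ hp
    simp only [Finset.mem_sigma, Finset.mem_filter, Set.Finite.mem_toFinset,
      Set.mem_setOf_eq] at hp
    obtain ⟨⟨hwA, hlw⟩, hne, hnd, hA, hhead, hlast, hch⟩ := hp
    have hil : i ∉ l := fun h => Finset.notMem_erase i A (hA i h)
    simp only [Set.Finite.mem_toFinset, Set.mem_setOf_eq]
    refine ⟨List.cons_ne_nil _ _, List.nodup_cons.mpr ⟨hil, hnd⟩,
      fun v hv => ?_, rfl, ?_, ?_⟩
    · rcases List.mem_cons.mp hv with rfl | hv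
      · exact hi
      · exact Finset.mem_of_mem_erase (hA v hv)
    · rw [getLast?_cons_of_ne_nil hne]; exact hlast
    · show List.IsChain _ (i :: l); rw [List.isChain_cons]
      refine ⟨fun h hh => ?_, hch⟩
      rw [hhead] at hh
      cases hh
      exact hlw
  · -- injective
    rintro ⟨w, l⟩ hp ⟨w', l'⟩ hp' heq
    simp only [List.cons.injEq, true_and] at heq
    simp only [Finset.coe_sigma, Set.mem_sigma_iff, Finset.mem_coe, Finset.mem_filter,
      Set.Finite.mem_toFinset, Set.mem_setOf_eq] at hp hp'
    have h1 : l.head? = some w := hp.2.2.2.2.1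
    have h2 : l'.head? = some w' := hp'.2.2.2.2.1
    subst heq
    rw [h1] at h2
    cases h2
    rfl
  · -- surjective
    intro l hl
    simp only [Finset.coe_sort_coe, Set.Finite.coe_toFinset, Set.mem_setOf_eq] at hl
    obtain ⟨hne, hnd, hA, hhead, hlast, hch⟩ := hl
    obtain ⟨t, rfl⟩ : ∃ t, l = i :: t := by
      cases l with
      | nil => exact absurd rfl hne
      | cons a t =>
        simp only [List.head?_cons, Option.some.injEq] at hhead
        exact ⟨t, by rw [hhead]⟩
    have htne : t ≠ [] := by
      rintro rfl
      simp only [List.getLast?_singleton, Option.some.injEq] at hlast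
      exact hij hlast
    obtain ⟨w, t', rfl⟩ : ∃ w t', t = w :: t' := by
      cases t with
      | nil => exact absurd rfl htne
      | cons w t' => exact ⟨w, t', rfl⟩
    have hnd' := List.nodup_cons.mp hnd
    have hch' := List.isChain_cons_cons.mp hch
    refine ⟨⟨w, w :: t'⟩, ?_, rfl⟩
    simp only [Finset.coe_sigma, Set.mem_sigma_iff, Finset.mem_coe, Finset.mem_filter,
      Set.Finite.mem_toFinset, Set.mem_setOf_eq]
    refine ⟨⟨Finset.mem_erase.mpr ⟨fun h => hnd'.1 (by rw [h]; exact List.mem_cons_self),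
        hA w (by simp)⟩, hch'.1⟩,
      List.cons_ne_nil _ _, hnd'.2,
      fun v hv => Finset.mem_erase.mpr ⟨fun h => hnd'.1 (h ▸ hv),
        hA v (List.mem_cons_of_mem _ hv)⟩, rfl,
      by rw [← getLast?_cons_of_ne_nil (List.cons_ne_nil w t')]; exact hlast, hch'.2⟩
  · -- values
    rintro ⟨w, l⟩ hp
    dsimp only
    simp only [Finset.mem_sigma, Finset.mem_filter, Set.Finite.mem_toFinset,
      Set.mem_setOf_eq] at hp
    obtain ⟨⟨hwA, hlw⟩, hne, hnd, hA, hhead, hlast, hch⟩ := hp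
    obtain ⟨t, rfl⟩ : ∃ t, l = w :: t := by
      cases l with
      | nil => exact absurd rfl hne
      | cons a t =>
        simp only [List.head?_cons, Option.some.injEq] at hhead
        exact ⟨t, by rw [hhead]⟩
    have hw1 : pathWeight lam (i :: w :: t) = -lam i w * pathWeight lam (w :: t) := by
      simp [pathWeight]
    have hset : A \ (i :: w :: t).toFinset = (A.erase i) \ (w :: t).toFinset := by
      ext v
      simp only [List.toFinset_cons, Finset.mem_sdiff, Finset.mem_insert, Finset.mem_erase,
        not_or]
      tauto
    rw [hw1, hset, map_mul]
    ring

end PathAux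

section GodsilAux

variable {n : ℕ}

lemma godsil_aux (r : Fin n → ℝ) {lam : Fin n → Fin n → ℝ}
    (hsym : ∀ j k, lam j k = lam k j) :
    ∀ (N : ℕ) (A : Finset (Fin n)), A.card ≤ N → ∀ i j : Fin n, i ∈ A → j ∈ A → i ≠ j →
      mu r lam (A.erase i) * mu r lam (A.erase j)
        = mu r lam A * mu r lam ((A.erase i).erase j) + PS r lam A i j := by
  intro N
  induction N with
  | zero =>
    intro A hA i j hi _ _
    rw [Finset.card_eq_zero.mp (Nat.le_zero.mp hA)] at hi
    simp at hi
  | succ N ih =>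
    intro A hA i j hi hj hij
    have hjB : j ∈ A.erase i := Finset.mem_erase.mpr ⟨hij.symm, hj⟩
    have hiAj : i ∈ A.erase j := Finset.mem_erase.mpr ⟨hij, hi⟩
    have hcard : (A.erase i).card ≤ N := by
      rw [Finset.card_erase_of_mem hi]
      have : 1 ≤ A.card := Finset.card_pos.mpr ⟨i, hi⟩
      omega
    have hE1 := mu_expand r hsym hi
    have hE2 := mu_expand r hsym hiAj
    rw [show (A.erase j).erase i = (A.erase i).erase j from Finset.erase_right_comm] at hE2
    have hPS := PS_decomp r (lam := lam) hij hi
    rw [← Finset.add_sum_erase _ _ hjB] at hE1 hPS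
    rw [PS_self r lam hjB] at hPS
    have hIH : ∀ w ∈ (A.erase i).erase j,
        mu r lam (A.erase i) * (C (lam i w) * mu r lam (((A.erase i).erase j).erase w))
          = C (lam i w) * mu r lam ((A.erase i).erase w) * mu r lam ((A.erase i).erase j)
            + C (-lam i w) * PS r lam (A.erase i) w j := by
      intro w hw
      obtain ⟨hwj, hwB⟩ := Finset.mem_erase.mp hw
      have h := ih (A.erase i) hcard w j hwB hjB hwj
      rw [show ((A.erase i).erase w).erase j = ((A.erase i).erase j).erase w from
        Finset.erase_right_comm] at h
      rw [map_neg]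
      linear_combination (-(C (lam i w))) * h
    have hsum := Finset.sum_congr rfl hIH
    rw [← Finset.mul_sum, Finset.sum_add_distrib, ← Finset.sum_mul] at hsum
    rw [hE1, hE2, hPS, map_neg]
    linear_combination hsum

end GodsilAux


/-- (Contraction lemma) `α_i(G) = α_i(G∖j) + λ_{i∼j}/α_j(G∖i)` as an identity
of rational functions, i.e.
`μ(G)/μ(G∖i) = μ(G∖j)/μ(G∖{i,j}) + λ_{i∼j}·μ(G∖{i,j})/μ(G∖i)`. -/
theorem stmt_3 (n : ℕ) (hn : 0 < n) (r : Fin n → ℝ) (lam : Fin n → Fin n → ℝ)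
    (hsym : ∀ j k, lam j k = lam k j) (hnonpos : ∀ j k, lam j k ≤ 0)
    (hdiag : ∀ i, lam i i = 0) (i j : Fin n) (hij : i ≠ j) :
    alpha r lam i Finset.univ =
      alpha r lam i (Finset.univ.erase j) +
        lamSim r lam i j Finset.univ / alpha r lam j (Finset.univ.erase i) := by
  have hg := godsil_aux r hsym (Finset.univ.card) Finset.univ le_rfl i j
    (Finset.mem_univ i) (Finset.mem_univ j) hij
  have hfin : (∑ᶠ l ∈ {l : List (Fin n) | IsPathIn lam Finset.univ i j l},
      toRF (C (pathWeight lam l) * mu r lam (Finset.univ \ l.toFinset) ^ 2))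
      = toRF (PS r lam Finset.univ i j) := by
    rw [← Set.Finite.coe_toFinset (pathSet_finite lam Finset.univ i j),
      finsum_mem_coe_finset, PS]
    exact (map_sum (algebraMap (Polynomial ℝ) (RatFunc ℝ)) _ _).symm
  simp only [alpha, lamSim]
  rw [hfin]
  have h1 : toRF (mu r lam (Finset.univ.erase i)) ≠ 0 :=
    RatFunc.algebraMap_ne_zero (mu_ne_zero r lam _)
  have h2 : toRF (mu r lam ((Finset.univ.erase i).erase j)) ≠ 0 :=
    RatFunc.algebraMap_ne_zero (mu_ne_zero r lam _)
  have hg' : toRF (mu r lam (Finset.univ.erase i)) * toRF (mu r lam (Finset.univ.erase j))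
      = toRF (mu r lam Finset.univ) * toRF (mu r lam ((Finset.univ.erase i).erase j))
        + toRF (PS r lam Finset.univ i j) := by
    simp only [toRF, ← map_mul, ← map_add, hg]
  rw [show (Finset.univ.erase j).erase i = (Finset.univ.erase i).erase j from
    Finset.erase_right_comm]
  field_simp
  ring_nf
  linear_combination (-1 : RatFunc ℝ) * hg'
end
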